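/- Every rational number p/q in reduced form with p odd and q even has a unique expression as a continued fraction r = n_k - 1/(n_{k-1} - 1/(... - 1/n_1)) with k even, all n_i even integers, and n_1,...,n_{k-1} nonzero. -/

import Mathlib

/-- Evaluation of the continued fraction `n_k - 1/(n_{k-1} - 1/(⋯ - 1/n_1))`,
where the list is `[n_k, n_{k-1}, …, n_1]` (outermost entry first). -/
def cfEval : List ℤ → ℚ
  | [] => 0
  | n :: l => (n : ℚ) - (cfEval l)⁻¹

lemma cfEval_cons (n : ℤ) (l : List ℤ) : cfEval (n :: l) = (n:ℚ) - (cfEval l)⁻¹ := rfl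

/-- A nonempty list of nonzero even integers evaluates to something of absolute value > 1. -/
lemma cf_abs_gt_one : ∀ l : List ℤ, l ≠ [] → (∀ n ∈ l, Even n) → (∀ n ∈ l, n ≠ 0) →
    1 < |cfEval l| := by
  intro l
  induction l with
  | nil => intro h; exact absurd rfl h
  | cons n t ih =>
    intro _ hev hnz
    have hn2 : (2:ℚ) ≤ |(n:ℚ)| := by
      have h1 : Even n := hev n (by simp)
      have h2 : n ≠ 0 := hnz n (by simp)
      have h3 : (2:ℤ) ≤ |n| := by
        rcases h1 with ⟨k, rfl⟩
        rcases abs_cases (k + k) with ⟨he, _⟩ | ⟨he, _⟩ <;> omega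
      rw [← Int.cast_abs]; exact_mod_cast h3
    rcases eq_or_ne t [] with rfl | ht
    · simp only [cfEval]
      norm_num
      linarith
    · have h := ih ht (fun m hm => hev m (by simp [hm])) (fun m hm => hnz m (by simp [hm]))
      have hinv : |(cfEval t)⁻¹| < 1 := by
        rw [abs_inv, inv_lt_one_iff₀]
        right; exact h
      rw [cfEval_cons]
      have := abs_sub_abs_le_abs_sub (n:ℚ) ((cfEval t)⁻¹)
      linarith

/-- head closeness -/
lemma head_close (n : ℤ) (t : List ℤ) (ht : t ≠ [])
    (hev : ∀ m ∈ t, Even m) (hnz : ∀ m ∈ t, m ≠ 0) :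
    |cfEval (n :: t) - n| < 1 ∧ cfEval (n :: t) ≠ (n:ℚ) := by
  have h := cf_abs_gt_one t ht hev hnz
  have h0 : cfEval t ≠ 0 := by
    intro h0; rw [h0] at h; norm_num at h
  rw [cfEval_cons]
  constructor
  · have : |(cfEval t)⁻¹| < 1 := by rw [abs_inv, inv_lt_one_iff₀]; right; exact h
    calc |(n:ℚ) - (cfEval t)⁻¹ - n| = |(cfEval t)⁻¹| := by ring_nf; rw [abs_neg]
      _ < 1 := this
  · intro he
    have : (cfEval t)⁻¹ = 0 := by linarith [sub_eq_iff_eq_add.mp he]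
    exact h0 (inv_eq_zero.mp this)

lemma even_close_unique (n₁ n₂ : ℤ) (r : ℚ) (h1 : Even n₁) (h2 : Even n₂)
    (c1 : |r - n₁| < 1) (c2 : |r - n₂| < 1) : n₁ = n₂ := by
  have : |(n₁:ℚ) - n₂| < 2 := by
    calc |(n₁:ℚ) - n₂| = |(n₁ - r) + (r - n₂)| := by ring_nf
      _ ≤ |(n₁:ℚ) - r| + |r - n₂| := abs_add_le _ _
      _ < 1 + 1 := by rw [abs_sub_comm]; exact add_lt_add c1 c2
      _ = 2 := by norm_num
  have h3 : |n₁ - n₂| < 2 := by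
    have := this
    rw [show ((n₁:ℚ) - n₂) = ((n₁ - n₂ : ℤ) : ℚ) by push_cast; ring, ← Int.cast_abs] at this
    exact_mod_cast this
  obtain ⟨a, rfl⟩ := h1; obtain ⟨b, rfl⟩ := h2
  rcases abs_cases (a + a - (b + b)) with ⟨he, _⟩ | ⟨he, _⟩ <;> omega

/-- p/q is not an integer when gcd = 1 and |q| ≥ 2 -/
lemma not_int (p q : ℤ) (hred : Int.gcd p q = 1) (hq : 2 ≤ q.natAbs) (m : ℤ) :
    (p:ℚ)/q ≠ (m:ℚ) := by
  intro h
  have hq0 : (q:ℚ) ≠ 0 := by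
    intro h0
    have : q = 0 := by exact_mod_cast h0
    omega
  rw [div_eq_iff hq0] at h
  have : p = m * q := by exact_mod_cast h
  have hdvd : q ∣ p := ⟨m, by linarith [this]⟩
  have := Int.natAbs_dvd_natAbs.mpr (Int.dvd_coe_gcd hdvd dvd_rfl)
  rw [hred] at this
  have := Nat.le_of_dvd one_pos this
  omega

/-- there is an even integer within distance 1 -/
lemma exists_even_close (r : ℚ) : ∃ n : ℤ, Even n ∧ |r - n| ≤ 1 := by
  refine ⟨2 * round (r / 2), ⟨round (r/2), by ring⟩, ?_⟩
  have := abs_sub_round (r / 2)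
  have h2 : r - ((2 * round (r/2) : ℤ) : ℚ) = 2 * (r/2 - round (r/2)) := by
    push_cast; ring
  rw [h2, abs_mul, abs_two]; linarith

/-- |p/q - n| < 1 iff |n*q - p| < |q| -/
lemma close_iff (p q n : ℤ) (hq : q ≠ 0) :
    |(p:ℚ)/q - n| < 1 ↔ (n * q - p).natAbs < q.natAbs := by
  have hq0 : (q:ℚ) ≠ 0 := by exact_mod_cast hq
  have h1 : (p:ℚ)/q - n = ((p - n*q : ℤ):ℚ) / q := by
    push_cast; field_simp
  rw [h1, abs_div, div_lt_one (abs_pos.mpr hq0), ← Int.cast_abs, ← Int.cast_abs, Int.cast_lt,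
    Int.abs_eq_natAbs, Int.abs_eq_natAbs]
  omega

lemma abs_div_gt_one (a b : ℤ) (hb : b ≠ 0) (h : b.natAbs < a.natAbs) :
    1 < |(a:ℚ)/b| := by
  have hb0 : (0:ℚ) < |(b:ℚ)| := by
    rw [← Int.cast_abs]
    exact_mod_cast abs_pos.mpr hb
  rw [abs_div, lt_div_iff₀ hb0, one_mul, ← Int.cast_abs, ← Int.cast_abs, Int.cast_lt,
    Int.abs_eq_natAbs, Int.abs_eq_natAbs]
  omega

lemma inv_head (p q n : ℤ) (hq : q ≠ 0) :
    ((n:ℚ) - (p:ℚ)/q)⁻¹ = (q:ℚ)/((n*q - p : ℤ):ℚ) := by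
  have hq0 : (q:ℚ) ≠ 0 := by exact_mod_cast hq
  have h1 : (n:ℚ) - (p:ℚ)/q = ((n*q - p : ℤ):ℚ)/q := by
    push_cast; field_simp
  rw [h1, inv_div]

lemma eval_step (p q n : ℤ) (hq : q ≠ 0) (hnp : n*q - p ≠ 0) :
    (n:ℚ) - ((q:ℚ)/((n*q - p : ℤ):ℚ))⁻¹ = (p:ℚ)/q := by
  have hq0 : (q:ℚ) ≠ 0 := by exact_mod_cast hq
  have hnp0 : ((n*q - p : ℤ):ℚ) ≠ 0 := by exact_mod_cast hnp
  rw [inv_div]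
  push_cast at hnp0 ⊢
  field_simp
  ring

/-- extract the closest even integer, strictly within distance 1 -/
lemma exists_even_close_strict (p q : ℤ) (hq : q ≠ 0) (hred : Int.gcd p q = 1)
    (hq2 : 2 ≤ q.natAbs) : ∃ n : ℤ, Even n ∧ |(p:ℚ)/q - n| < 1 := by
  obtain ⟨n, hne, hcl⟩ := exists_even_close ((p:ℚ)/q)
  refine ⟨n, hne, lt_of_le_of_ne hcl ?_⟩
  intro h
  rcases (abs_eq (by norm_num : (0:ℚ) ≤ 1)).mp h with h1 | h1
  · exact not_int p q hred hq2 (n + 1) (by push_cast; linarith)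
  · exact not_int p q hred hq2 (n - 1) (by push_cast; linarith)

lemma gcd_step (p q n : ℤ) (hred : Int.gcd p q = 1) : Int.gcd q (n*q - p) = 1 := by
  rw [← Int.isCoprime_iff_gcd_eq_one] at *
  have h1 : IsCoprime q (-p) := hred.symm.neg_right
  have h2 := h1.add_mul_left_right n
  have : -p + q * n = n * q - p := by ring
  rwa [this] at h2

lemma main_induction : ∀ d : ℕ,
    (∀ p q : ℤ, q.natAbs < d → q ≠ 0 → Odd p → Even q → Int.gcd p q = 1 →
      ∃! l : List ℤ, Even l.length ∧ (∀ n ∈ l, Even n) ∧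
        (∀ n ∈ l.tail, n ≠ 0) ∧ cfEval l = (p : ℚ) / (q : ℚ)) ∧
    (∀ a b : ℤ, b.natAbs < d → Odd b → Even a → b.natAbs < a.natAbs → Int.gcd a b = 1 →
      ∃! l : List ℤ, ¬Even l.length ∧ (∀ n ∈ l, Even n) ∧
        (∀ n ∈ l, n ≠ 0) ∧ cfEval l = (a : ℚ) / (b : ℚ)) := by
  intro d
  induction d using Nat.strong_induction_on with
  | _ d ih =>
  constructor
  · -- P part
    intro p q hlt hq hp hqe hred
    have hq2 : 2 ≤ q.natAbs := by
      obtain ⟨k, rfl⟩ := hqe; omega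
    obtain ⟨n, hne, hcl⟩ := exists_even_close_strict p q hq hred hq2
    have hkey : (n*q - p).natAbs < q.natAbs := (close_iff p q n hq).mp hcl
    have hnp : n*q - p ≠ 0 := by
      intro h0
      have : (p:ℚ)/q = (n:ℚ) := by
        have hp' : p = n * q := by omega
        have hq0 : (q:ℚ) ≠ 0 := by exact_mod_cast hq
        rw [hp']; push_cast; field_simp
      exact not_int p q hred hq2 n this
    -- apply Q with pair (q, n*q - p)
    have hQ := (ih q.natAbs hlt).2 q (n*q - p) hkey
      (by rcases hp with ⟨k, hk⟩; rcases hqe with ⟨j, hj⟩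
          exact ⟨n*j - k - 1, by rw [hj, hk]; ring⟩)
      hqe hkey (gcd_step p q n hred)
    obtain ⟨t, ⟨htlen, htev, htnz, hteval⟩, htuniq⟩ := hQ
    refine ⟨n :: t, ⟨?_, ?_, ?_, ?_⟩, ?_⟩
    · simpa [Nat.even_add_one] using htlen
    · intro m hm
      rcases List.mem_cons.mp hm with rfl | hm
      · exact hne
      · exact htev m hm
    · exact htnz
    · rw [cfEval_cons, hteval]
      exact eval_step p q n hq hnp
    · -- uniqueness
      rintro l' ⟨hlen', hev', htl', heval'⟩
      match l' with
      | [] =>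
        exfalso
        have : (p:ℚ)/q = 0 := heval'.symm
        rw [div_eq_zero_iff] at this
        rcases this with h | h
        · have : p = 0 := by exact_mod_cast h
          rcases hp with ⟨k, hk⟩; omega
        · have : q = 0 := by exact_mod_cast h
          exact hq this
      | h :: t' =>
        have ht' : t' ≠ [] := by
          intro h0; subst h0
          simp at hlen'
        have hev'' : ∀ m ∈ t', Even m := fun m hm => hev' m (List.mem_cons_of_mem _ hm)
        have hnz'' : ∀ m ∈ t', m ≠ 0 := htl'
        obtain ⟨hc1, hc2⟩ := head_close h t' ht' hev'' hnz''
        rw [heval'] at hc1 hc2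
        have hhn : h = n := even_close_unique h n ((p:ℚ)/q)
          (hev' h (by simp)) hne hc1 hcl
        subst hhn
        have hteq : cfEval t' = (q:ℚ)/((h*q - p : ℤ):ℚ) := by
          have h1 : (cfEval t')⁻¹ = (h:ℚ) - (p:ℚ)/q := by
            rw [cfEval_cons] at heval'; linarith
          have := congrArg (·⁻¹) h1
          simp only [inv_inv] at this
          rw [this, inv_head p q h hq]
        congr 1
        apply htuniq
        refine ⟨?_, hev'', hnz'', by rw [hteq]⟩
        · intro he
          rw [List.length_cons, Nat.even_add_one] at hlen'
          exact hlen' he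
  · -- Q part
    intro a b hlt hbodd haev hba hred
    have hb : b ≠ 0 := by rintro rfl; rcases hbodd with ⟨k, hk⟩; omega
    rcases Nat.lt_or_ge b.natAbs 2 with hb1 | hb2
    · -- base case: b = ±1
      have hb1' : b = 1 ∨ b = -1 := by omega
      have ha0 : a ≠ 0 := by rintro rfl; simp at hba
      have hval : (a:ℚ)/b = ((a*b : ℤ):ℚ) := by
        rcases hb1' with rfl | rfl
        · push_cast; norm_num
        · push_cast; field_simp
      refine ⟨[a*b], ⟨by simp, ?_, ?_, ?_⟩, ?_⟩
      · intro m hm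
        simp only [List.mem_singleton] at hm
        subst hm
        exact haev.mul_right b
      · intro m hm
        simp only [List.mem_singleton] at hm
        subst hm
        rcases hb1' with rfl | rfl <;> simpa using ha0
      · simp [cfEval, hval]
      · rintro l' ⟨hlen', hev', hnz', heval'⟩
        match l' with
        | [] => simp at hlen'
        | h :: t' =>
          rcases eq_or_ne t' [] with rfl | ht'
          · have : (h:ℚ) = (a:ℚ)/b := by
              rw [← heval']; simp [cfEval]
            have : (h:ℚ) = ((a*b : ℤ):ℚ) := by rw [this, hval]
            have : h = a*b := by exact_mod_cast this
            rw [this]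
          · exfalso
            obtain ⟨hc1, hc2⟩ := head_close h t' ht'
              (fun m hm => hev' m (List.mem_cons_of_mem _ hm))
              (fun m hm => hnz' m (List.mem_cons_of_mem _ hm))
            rw [heval'] at hc1 hc2
            have : h = a*b := even_close_unique h (a*b) ((a:ℚ)/b)
              (hev' h (by simp)) (haev.mul_right b) hc1 (by rw [hval]; simp)
            apply hc2
            rw [this, hval]
    · -- recursive case
      have hnotint := not_int a b hred hb2
      obtain ⟨m, hme, hcl⟩ := exists_even_close_strict a b hb hred hb2
      have hr1 : 1 < |(a:ℚ)/b| := abs_div_gt_one a b hb hba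
      have hm0 : m ≠ 0 := by
        rintro rfl
        simp only [Int.cast_zero, sub_zero] at hcl
        linarith
      have hkey : (m*b - a).natAbs < b.natAbs := (close_iff a b m hb).mp hcl
      have hmb : m*b - a ≠ 0 := by
        intro h0
        have ha' : a = m * b := by omega
        have hb0 : (b:ℚ) ≠ 0 := by exact_mod_cast hb
        exact hnotint m (by rw [ha']; push_cast; field_simp)
      have hP := (ih b.natAbs hlt).1 b (m*b - a) hkey hmb hbodd
        (by rcases hme with ⟨k, hk⟩; rcases haev with ⟨j, hj⟩
            exact ⟨k*b - j, by rw [hk, hj]; ring⟩)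
        (gcd_step a b m hred)
      obtain ⟨t, ⟨htlen, htev, httl, hteval⟩, htuniq⟩ := hP
      have htgt : 1 < |cfEval t| := by
        rw [hteval]; exact abs_div_gt_one b (m*b - a) hmb hkey
      have htne : t ≠ [] := by
        rintro rfl
        simp only [cfEval, abs_zero] at htgt
        linarith
      have htnz : ∀ n ∈ t, n ≠ 0 := by
        match t, htne with
        | h₀ :: t₀, _ =>
          intro n hn
          rcases List.mem_cons.mp hn with rfl | hn
          · -- head nonzero
            rcases eq_or_ne t₀ [] with rfl | ht₀
            · intro h0; subst h0
              simp only [cfEval, Int.cast_zero, inv_zero, sub_zero, abs_zero] at htgt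
              linarith
            · obtain ⟨hc1, _⟩ := head_close n t₀ ht₀
                (fun x hx => htev x (List.mem_cons_of_mem _ hx)) httl
              intro h0; subst h0
              simp only [Int.cast_zero, sub_zero] at hc1
              linarith
          · exact httl n hn
      refine ⟨m :: t, ⟨?_, ?_, ?_, ?_⟩, ?_⟩
      · rw [List.length_cons, Nat.even_add_one]
        simpa using htlen
      · intro x hx
        rcases List.mem_cons.mp hx with rfl | hx
        · exact hme
        · exact htev x hx
      · intro x hx
        rcases List.mem_cons.mp hx with rfl | hx
        · exact hm0
        · exact htnz x hx
      · rw [cfEval_cons, hteval]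
        exact eval_step a b m hb hmb
      · rintro l' ⟨hlen', hev', hnz', heval'⟩
        match l' with
        | [] => simp at hlen'
        | h :: t' =>
          have ht' : t' ≠ [] := by
            rintro rfl
            have : (h:ℚ) = (a:ℚ)/b := by rw [← heval']; simp [cfEval]
            exact hnotint h this.symm
          obtain ⟨hc1, hc2⟩ := head_close h t' ht'
            (fun x hx => hev' x (List.mem_cons_of_mem _ hx))
            (fun x hx => hnz' x (List.mem_cons_of_mem _ hx))
          rw [heval'] at hc1 hc2
          have hhm : h = m := even_close_unique h m ((a:ℚ)/b)
            (hev' h (by simp)) hme hc1 hcl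
          subst hhm
          have hteq : cfEval t' = (b:ℚ)/((h*b - a : ℤ):ℚ) := by
            have h1 : (cfEval t')⁻¹ = (h:ℚ) - (a:ℚ)/b := by
              rw [cfEval_cons] at heval'; linarith
            have := congrArg (·⁻¹) h1
            simp only [inv_inv] at this
            rw [this, inv_head a b h hb]
          congr 1
          apply htuniq
          refine ⟨?_, fun x hx => hev' x (List.mem_cons_of_mem _ hx),
            fun x hx => hnz' x (List.mem_cons_of_mem _ (List.mem_of_mem_tail hx)),
            by rw [hteq]⟩
          · rw [List.length_cons, Nat.even_add_one] at hlen'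
            simpa using hlen'

theorem stmt1 (p q : ℤ) (hq : q ≠ 0) (hred : Int.gcd p q = 1)
    (hp : Odd p) (hqe : Even q) :
    ∃! l : List ℤ, Even l.length ∧ (∀ n ∈ l, Even n) ∧
      (∀ n ∈ l.tail, n ≠ 0) ∧ cfEval l = (p : ℚ) / (q : ℚ) := by
  exact (main_induction (q.natAbs + 1)).1 p q (Nat.lt_succ_self _) hq hp hqe hred
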